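/- There exists an injective star-algebra homomorphism Ψ : ℓ∞ → ℓ∞ that is an isometry and such that the only element of the range of Ψ lying in c0 is 0; that is, ℓ∞ contains a *-isomorphic copy of itself inside (ℓ∞ \ c0) ∪ {0}. -/

import Mathlib

open Filter Topology ENNReal

noncomputable section

/-- `ℓ∞`, the bounded complex sequences. -/
abbrev linf : Type := lp (fun _ : ℕ => ℂ) ∞

/-- `c₀`, the elements of `ℓ∞` tending to zero. -/
def c0 : Set linf := {f | Tendsto (fun n => (f : ∀ _ : ℕ, ℂ) n) atTop (𝓝 0)}

private lemma comp_memℓp (f : linf) :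
    Memℓp (fun n : ℕ => (f : ∀ _ : ℕ, ℂ) (Nat.unpair n).1) ∞ := by
  apply memℓp_infty
  refine ⟨‖f‖, ?_⟩
  rintro x ⟨n, rfl⟩
  exact lp.norm_apply_le_norm ENNReal.top_ne_zero f _

/-- The map `f ↦ f ∘ (unpair ·).1` as a star-algebra hom. -/
def Psi : linf →⋆ₙₐ[ℂ] linf where
  toFun f := ⟨fun n => (f : ∀ _ : ℕ, ℂ) (Nat.unpair n).1, comp_memℓp f⟩
  map_smul' c f := by ext n; simp [lp.coeFn_smul]
  map_zero' := by ext n; simp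
  map_add' f g := by ext n; simp [lp.coeFn_add]; rfl
  map_mul' f g := by ext n; simp [lp.infty_coeFn_mul]
  map_star' f := by ext n; simp [lp.coeFn_star]

lemma Psi_apply (f : linf) (n : ℕ) :
    (Psi f : ∀ _ : ℕ, ℂ) n = (f : ∀ _ : ℕ, ℂ) (Nat.unpair n).1 := rfl

lemma Psi_norm (f : linf) : ‖Psi f‖ = ‖f‖ := by
  apply le_antisymm
  · apply lp.norm_le_of_forall_le (norm_nonneg f)
    intro n
    exact lp.norm_apply_le_norm ENNReal.top_ne_zero f _
  · apply lp.norm_le_of_forall_le (norm_nonneg (Psi f))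
    intro k
    have : ‖(Psi f : ∀ _ : ℕ, ℂ) (Nat.pair k 0)‖ ≤ ‖Psi f‖ :=
      lp.norm_apply_le_norm ENNReal.top_ne_zero (Psi f) _
    rwa [Psi_apply, Nat.unpair_pair] at this

lemma Psi_isometry : Isometry Psi :=
  AddMonoidHomClass.isometry_of_norm Psi Psi_norm

theorem exists_star_isomorphic_copy_of_linf_avoiding_c0 :
    ∃ Ψ : linf →⋆ₙₐ[ℂ] linf,
      Isometry Ψ ∧ Function.Injective Ψ ∧ ∀ y ∈ Set.range Ψ, y ∈ c0 → y = 0 := by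
  refine ⟨Psi, Psi_isometry, Psi_isometry.injective, ?_⟩
  rintro y ⟨f, rfl⟩ hy
  have hf : f = 0 := by
    ext k
    have h1 : Tendsto (fun n : ℕ => (Psi f : ∀ _ : ℕ, ℂ) (Nat.pair k n)) atTop (𝓝 0) := by
      refine hy.comp ?_
      exact tendsto_atTop_mono (fun n => Nat.right_le_pair k n) tendsto_id
    have h2 : (fun n : ℕ => (Psi f : ∀ _ : ℕ, ℂ) (Nat.pair k n)) =
        fun _ => (f : ∀ _ : ℕ, ℂ) k := by
      funext n; rw [Psi_apply, Nat.unpair_pair]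
    rw [h2] at h1
    have := tendsto_nhds_unique tendsto_const_nhds h1
    simpa using this
  rw [hf, map_zero]
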